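/- Assume (H), let k ≥ κ and c₁ > c₂ > 0. For i = 1, 2, let φᵢ be a sharp local wave profile with speed cᵢ and ceiling k on (−∞, ξ₀ⁱ), satisfying the edge asymptotics φᵢ(ξ)·ξ^{−1/(m−1)} → ((m−1)cᵢ/m)^{1/(m−1)} as ξ → 0⁺, with maximal existence interval, and let (0, ξ̂ᵢ) ⊆ (0, ξ₀ⁱ) be the maximal interval on which φᵢ is strictly increasing. Then for all ξ₁ ∈ (0, ξ̂₁) and ξ₂ ∈ (0, ξ̂₂) with φ₁(ξ₁) = φ₂(ξ₂), one has φ₁'(ξ₁) > φ₂'(ξ₂) (equivalently, the phase functions satisfy ψ̃_{c₁}(v) > ψ̃_{c₂}(v) at every common value v of the two profiles in their increasing ranges). -/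

import Mathlib

open Real Filter Set MeasureTheory

/-- Standing hypotheses (H): degenerate Fisher-KPP data. -/
structure FisherData where
  m : ℝ
  r : ℝ
  d : ℝ → ℝ
  b : ℝ → ℝ
  κ : ℝ
  hm : 1 < m
  hr : 0 ≤ r
  hd_smooth : ContDiffOn ℝ 2 d (Set.Ici 0)
  hb_smooth : ContDiffOn ℝ 2 b (Set.Ici 0)
  hd0 : d 0 = 0
  hb0 : b 0 = 0
  hκ : 0 < κ
  heq : d κ = b κ
  hsign : ∀ s : ℝ, 0 < s → s ≠ κ → (b s - d s) * (s - κ) < 0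
  hbd0 : derivWithin d (Set.Ici 0) 0 < derivWithin b (Set.Ici 0) 0
  hd0' : 0 ≤ derivWithin d (Set.Ici 0) 0
  hd' : ∀ s : ℝ, 0 ≤ s → 0 ≤ derivWithin d (Set.Ici 0) s
  hb' : ∀ s : ℝ, 0 ≤ s → 0 ≤ derivWithin b (Set.Ici 0) s

/-- The function `φ^m` (real power). -/
noncomputable def phiPow (m : ℝ) (φ : ℝ → ℝ) : ℝ → ℝ := fun ξ => φ ξ ^ m

/-- A sharp local wave profile with speed `c` and ceiling `k` on `(-∞, ξ₀)`
(`ξ₀ ∈ (0, +∞]` as an extended real). -/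
def IsSharpLocalProfile (D : FisherData) (c k : ℝ) (ξ₀ : EReal) (φ : ℝ → ℝ) : Prop :=
  0 < ξ₀ ∧ Continuous φ ∧
  (∀ ξ : ℝ, ξ ≤ 0 → φ ξ = 0) ∧
  (∀ ξ : ℝ, 0 < ξ → (ξ : EReal) < ξ₀ → φ ξ ∈ Set.Ioo 0 k) ∧
  (∀ ξ : ℝ, 0 < ξ → (ξ : EReal) < ξ₀ → DifferentiableAt ℝ φ ξ) ∧
  (∀ ξ : ℝ, 0 < ξ → (ξ : EReal) < ξ₀ → DifferentiableAt ℝ (phiPow D.m φ) ξ) ∧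
  (∀ ξ : ℝ, 0 < ξ → (ξ : EReal) < ξ₀ → DifferentiableAt ℝ (deriv (phiPow D.m φ)) ξ) ∧
  Filter.Tendsto (deriv (phiPow D.m φ)) (nhdsWithin 0 (Set.Ioi 0)) (nhds 0) ∧
  (∀ ξ : ℝ, 0 < ξ → (ξ : EReal) < ξ₀ →
    c * deriv φ ξ = deriv (deriv (phiPow D.m φ)) ξ - D.d (φ ξ) + D.b (φ (ξ - c * D.r)))

/-- Edge asymptotics `φ(ξ)·ξ^{-1/(m-1)} → ((m-1)c/m)^{1/(m-1)}` as `ξ → 0⁺`. -/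
def EdgeAsymp (m c : ℝ) (φ : ℝ → ℝ) : Prop :=
  Filter.Tendsto (fun ξ : ℝ => φ ξ * ξ ^ (-(1 / (m - 1))))
    (nhdsWithin 0 (Set.Ioi 0)) (nhds (((m - 1) * c / m) ^ (1 / (m - 1))))

/-- The filter of real numbers tending to `ξ₀ ∈ (0, +∞]` from the left
(equal to `atTop` when `ξ₀ = ⊤`). -/
noncomputable def edgeFilter (ξ₀ : EReal) : Filter ℝ :=
  Filter.comap (fun x : ℝ => (x : EReal)) (nhdsWithin ξ₀ (Set.Iio ξ₀))
/-! ### Auxiliary material for the proof -/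

section PCAux

open Set Filter

lemma pc_deriv_nonneg_of_right {f : ℝ → ℝ} {x f' : ℝ} (hf : HasDerivAt f f' x)
    (h : ∀ᶠ y in nhdsWithin x (Set.Ioi x), f x ≤ f y) : 0 ≤ f' := by
  have hs : Filter.Tendsto (slope f x) (nhdsWithin x (Set.Ioi x)) (nhds f') :=
    (hasDerivAt_iff_tendsto_slope.1 hf).mono_left
      (nhdsWithin_mono x fun y hy => Set.mem_compl_singleton_iff.2 (ne_of_gt (Set.mem_Ioi.1 hy)))
  refine ge_of_tendsto hs ?_
  filter_upwards [self_mem_nhdsWithin, h] with y hy hxy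
  rw [slope_def_field]
  have : x < y := Set.mem_Ioi.1 hy
  exact div_nonneg (by linarith) (by linarith)

lemma pc_deriv_nonpos_of_left {f : ℝ → ℝ} {x f' : ℝ} (hf : HasDerivAt f f' x)
    (h : ∀ᶠ y in nhdsWithin x (Set.Iio x), f x ≤ f y) : f' ≤ 0 := by
  have hs : Filter.Tendsto (slope f x) (nhdsWithin x (Set.Iio x)) (nhds f') :=
    (hasDerivAt_iff_tendsto_slope.1 hf).mono_left
      (nhdsWithin_mono x fun y hy => Set.mem_compl_singleton_iff.2 (ne_of_lt (Set.mem_Iio.1 hy)))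
  refine le_of_tendsto hs ?_
  filter_upwards [self_mem_nhdsWithin, h] with y hy hxy
  rw [slope_def_field]
  have hyx : y < x := Set.mem_Iio.1 hy
  apply div_nonpos_of_nonneg_of_nonpos (by linarith) (by linarith)

lemma pc_diffAt {f : ℝ → ℝ} (hf : ContDiffOn ℝ 2 f (Set.Ici 0)) {x : ℝ} (hx : 0 < x) :
    DifferentiableAt ℝ f x :=
  ((hf.differentiableOn (by norm_num)) x (le_of_lt hx)).differentiableAt
    (Ici_mem_nhds hx)

lemma pc_derivWithin_eq {f : ℝ → ℝ} {x : ℝ} (hx : 0 < x) :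
    derivWithin f (Set.Ici 0) x = deriv f x :=
  derivWithin_of_mem_nhds (Ici_mem_nhds hx)

lemma pc_mono {f : ℝ → ℝ} (hf : ContDiffOn ℝ 2 f (Set.Ici 0))
    (hf' : ∀ s : ℝ, 0 ≤ s → 0 ≤ derivWithin f (Set.Ici 0) s) :
    ∀ x y : ℝ, 0 ≤ x → x ≤ y → f x ≤ f y := by
  intro x y hx hxy
  have key : MonotoneOn f (Set.Icc x y) := by
    apply monotoneOn_of_deriv_nonneg (convex_Icc x y)
      (hf.continuousOn.mono (fun t ht => le_trans hx ht.1))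
    · intro t ht
      rw [interior_Icc] at ht
      exact (pc_diffAt hf (lt_of_le_of_lt hx ht.1)).differentiableWithinAt
    · intro t ht
      rw [interior_Icc] at ht
      have h0 : 0 < t := lt_of_le_of_lt hx ht.1
      rw [← pc_derivWithin_eq h0]
      exact hf' t h0.le
  exact key (Set.left_mem_Icc.2 hxy) (Set.right_mem_Icc.2 hxy) hxy

lemma pc_lip {f : ℝ → ℝ} (hf : ContDiffOn ℝ 2 f (Set.Ici 0)) {k L : ℝ}
    (hL : ∀ x ∈ Set.Icc (0:ℝ) k, |derivWithin f (Set.Ici 0) x| ≤ L) :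
    ∀ x y : ℝ, 0 ≤ x → x ≤ y → y ≤ k → f y - f x ≤ L * (y - x) := by
  intro x y hx hxy hyk
  have key : MonotoneOn (fun t => L * t - f t) (Set.Icc x y) := by
    apply monotoneOn_of_deriv_nonneg (convex_Icc x y)
    · exact (continuousOn_const.mul continuousOn_id).sub
        (hf.continuousOn.mono (fun t ht => le_trans hx ht.1))
    · intro t ht
      rw [interior_Icc] at ht
      exact ((differentiableAt_id.const_mul L).sub
        (pc_diffAt hf (lt_of_le_of_lt hx ht.1))).differentiableWithinAt
    · intro t ht
      rw [interior_Icc] at ht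
      have h0 : 0 < t := lt_of_le_of_lt hx ht.1
      have h1 : HasDerivAt (fun t : ℝ => L * t) L t := by
        simpa using (hasDerivAt_id t).const_mul L
      have hd : HasDerivAt (fun t => L * t - f t) (L - deriv f t) t :=
        h1.sub (pc_diffAt hf h0).hasDerivAt
      rw [hd.deriv]
      have hDt : deriv f t ≤ L := by
        rw [← pc_derivWithin_eq h0]
        exact (abs_le.1 (hL t ⟨h0.le, le_trans ht.2.le hyk⟩)).2
      linarith
  have := key (Set.left_mem_Icc.2 hxy) (Set.right_mem_Icc.2 hxy) hxy
  dsimp only at this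
  linarith

lemma pc_exists_L (D : FisherData) {k : ℝ} (hk : 0 ≤ k) :
    ∃ L : ℝ, 0 ≤ L ∧ (∀ x ∈ Set.Icc (0:ℝ) k, |derivWithin D.d (Set.Ici 0) x| ≤ L)
      ∧ (∀ x ∈ Set.Icc (0:ℝ) k, |derivWithin D.b (Set.Ici 0) x| ≤ L) := by
  have hc1 : ContinuousOn (derivWithin D.d (Set.Ici 0)) (Set.Icc 0 k) :=
    (D.hd_smooth.continuousOn_derivWithin (uniqueDiffOn_Ici 0) (by norm_num)).mono
      Set.Icc_subset_Ici_self
  have hc2 : ContinuousOn (derivWithin D.b (Set.Ici 0)) (Set.Icc 0 k) :=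
    (D.hb_smooth.continuousOn_derivWithin (uniqueDiffOn_Ici 0) (by norm_num)).mono
      Set.Icc_subset_Ici_self
  obtain ⟨L₁, hL₁⟩ := isCompact_Icc.exists_bound_of_continuousOn hc1
  obtain ⟨L₂, hL₂⟩ := isCompact_Icc.exists_bound_of_continuousOn hc2
  refine ⟨max L₁ L₂, ?_, ?_, ?_⟩
  · have := hL₁ 0 ⟨le_rfl, hk⟩
    exact le_trans (norm_nonneg _) (le_trans this (le_max_left _ _))
  · intro x hx
    simpa [Real.norm_eq_abs] using le_trans (hL₁ x hx) (le_max_left _ _)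
  · intro x hx
    simpa [Real.norm_eq_abs] using le_trans (hL₂ x hx) (le_max_right _ _)

end PCAux
section PCPackSec

open Set Filter

/-- A localized package of profile data on a real interval `(0, ξb]`. -/
structure PCPack (D : FisherData) (c k : ℝ) where
  φ : ℝ → ℝ
  ξb : ℝ
  hc : 0 < c
  hξb : 0 < ξb
  cont : Continuous φ
  zero : ∀ ξ : ℝ, ξ ≤ 0 → φ ξ = 0
  mem : ∀ ξ : ℝ, 0 < ξ → ξ ≤ ξb → φ ξ ∈ Set.Ioo 0 k
  dφ : ∀ ξ : ℝ, 0 < ξ → ξ ≤ ξb → DifferentiableAt ℝ φ ξ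
  dw2 : ∀ ξ : ℝ, 0 < ξ → ξ ≤ ξb → DifferentiableAt ℝ (deriv (phiPow D.m φ)) ξ
  lim : Filter.Tendsto (deriv (phiPow D.m φ)) (nhdsWithin 0 (Set.Ioi 0)) (nhds 0)
  ode : ∀ ξ : ℝ, 0 < ξ → ξ ≤ ξb →
    c * deriv φ ξ = deriv (deriv (phiPow D.m φ)) ξ - D.d (φ ξ) + D.b (φ (ξ - c * D.r))
  mono : StrictMonoOn φ (Set.Ioc 0 ξb)

namespace PCPack

variable {D : FisherData} {c k : ℝ} (P : PCPack D c k)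

/-- The derivative of `φ^m`. -/
noncomputable def w : ℝ → ℝ := deriv (phiPow D.m P.φ)

include P in
lemma hm1 : (0:ℝ) < D.m - 1 := by linarith [D.hm]

include P in
lemma hm0 : (0:ℝ) < D.m := by linarith [D.hm]

include P in
lemma hk : 0 < k := lt_trans (P.mem P.ξb P.hξb le_rfl).1 (P.mem P.ξb P.hξb le_rfl).2

lemma pos {ξ : ℝ} (h0 : 0 < ξ) (hb : ξ ≤ P.ξb) : 0 < P.φ ξ := (P.mem ξ h0 hb).1

lemma ltk {ξ : ℝ} (h0 : 0 < ξ) (hb : ξ ≤ P.ξb) : P.φ ξ < k := (P.mem ξ h0 hb).2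

lemma nonneg {ξ : ℝ} (hb : ξ ≤ P.ξb) : 0 ≤ P.φ ξ := by
  rcases le_or_gt ξ 0 with h | h
  · rw [P.zero ξ h]
  · exact (P.pos h hb).le

lemma le_k {ξ : ℝ} (hb : ξ ≤ P.ξb) : P.φ ξ ≤ k := by
  rcases le_or_gt ξ 0 with h | h
  · rw [P.zero ξ h]; exact P.hk.le
  · exact (P.ltk h hb).le

lemma mono' {a b' : ℝ} (hab : a ≤ b') (hb : b' ≤ P.ξb) : P.φ a ≤ P.φ b' := by
  rcases le_or_gt b' 0 with h | h
  · rw [P.zero a (hab.trans h), P.zero b' h]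
  · rcases le_or_gt a 0 with ha | ha
    · rw [P.zero a ha]; exact (P.pos h hb).le
    · exact P.mono.monotoneOn ⟨ha, hab.trans hb⟩ ⟨h, hb⟩ hab

lemma hasDeriv_pow {ξ : ℝ} (h0 : 0 < ξ) (hb : ξ ≤ P.ξb) :
    HasDerivAt (phiPow D.m P.φ) (D.m * P.φ ξ ^ (D.m - 1) * deriv P.φ ξ) ξ :=
  (Real.hasDerivAt_rpow_const (p := D.m) (Or.inl (P.pos h0 hb).ne')).comp ξ
    (P.dφ ξ h0 hb).hasDerivAt

lemma w_eq {ξ : ℝ} (h0 : 0 < ξ) (hb : ξ ≤ P.ξb) :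
    P.w ξ = D.m * P.φ ξ ^ (D.m - 1) * deriv P.φ ξ := (P.hasDeriv_pow h0 hb).deriv

lemma derivφ_nonneg {ξ : ℝ} (h0 : 0 < ξ) (hb : ξ < P.ξb) : 0 ≤ deriv P.φ ξ := by
  apply pc_deriv_nonneg_of_right (P.dφ ξ h0 hb.le).hasDerivAt
  filter_upwards [Ioo_mem_nhdsGT_of_mem ⟨le_refl ξ, hb⟩] with y hy
  exact (P.mono ⟨h0, hb.le⟩ ⟨h0.trans hy.1, hy.2.le⟩ hy.1).le

lemma w_nonneg {ξ : ℝ} (h0 : 0 < ξ) (hb : ξ < P.ξb) : 0 ≤ P.w ξ := by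
  rw [P.w_eq h0 hb.le]
  exact mul_nonneg (mul_nonneg P.hm0.le (Real.rpow_pos_of_pos (P.pos h0 hb.le) _).le)
    (P.derivφ_nonneg h0 hb)

lemma ode' {ξ : ℝ} (h0 : 0 < ξ) (hb : ξ ≤ P.ξb) :
    deriv P.w ξ = c * deriv P.φ ξ + D.d (P.φ ξ) - D.b (P.φ (ξ - c * D.r)) := by
  have h := P.ode ξ h0 hb
  show deriv (deriv (phiPow D.m P.φ)) ξ = _
  linarith

end PCPack

end PCPackSec
section PCPackSec2

open Set Filter

namespace PCPack

variable {D : FisherData} {c k : ℝ} (P : PCPack D c k)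

set_option maxHeartbeats 1000000 in
/-- Step 1: the derivative of the profile is strictly positive on the increasing interval. -/
lemma derivφ_pos {L : ℝ}
    (hLd : ∀ x y : ℝ, 0 ≤ x → x ≤ y → y ≤ k → D.d y - D.d x ≤ L * (y - x))
    (hbmono : ∀ x y : ℝ, 0 ≤ x → x ≤ y → D.b x ≤ D.b y)
    {ξ : ℝ} (h0 : 0 < ξ) (hb : ξ < P.ξb) : 0 < deriv P.φ ξ := by
  rcases (P.derivφ_nonneg h0 hb).lt_or_eq with h | h
  · exact h
  exfalso
  have hd0 : deriv P.φ ξ = 0 := h.symm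
  set v := P.φ ξ with hv
  have hvpos : 0 < v := P.pos h0 hb.le
  have hw0 : P.w ξ = 0 := by rw [P.w_eq h0 hb.le, hd0, mul_zero]
  have hlocmin : IsLocalMin P.w ξ := by
    filter_upwards [isOpen_Ioo.mem_nhds (⟨h0, hb⟩ : ξ ∈ Set.Ioo 0 P.ξb)] with y hy
    rw [hw0]
    exact P.w_nonneg hy.1 hy.2
  have hdw0 : deriv P.w ξ = 0 := hlocmin.deriv_eq_zero
  have hcr : 0 ≤ c * D.r := mul_nonneg P.hc.le D.hr
  have hbd : D.b (P.φ (ξ - c * D.r)) = D.d v := by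
    have h2 := P.ode' h0 hb.le
    rw [hdw0, hd0] at h2
    linarith
  set δ := (P.ξb - ξ) / 2 with hδ
  have hδpos : 0 < δ := by rw [hδ]; linarith
  have hξδ : ξ + δ < P.ξb := by rw [hδ]; linarith
  set γ := D.m * v ^ (D.m - 1) with hγ
  have hγpos : 0 < γ := mul_pos P.hm0 (Real.rpow_pos_of_pos hvpos _)
  set K := max ((1 + c) / γ) L with hK
  have hγK : (1 + c) / γ ≤ K := le_max_left _ _
  have hLK : L ≤ K := le_max_right _ _
  set z : ℝ → ℝ := fun s => (P.φ s - v) + P.w s with hz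
  have key : ∀ s ∈ Set.Ioo ξ (ξ + δ), HasDerivAt z (deriv P.φ s + deriv P.w s) s ∧
      deriv P.φ s + deriv P.w s ≤ K * z s := by
    intro s hs
    have hs0 : 0 < s := h0.trans hs.1
    have hsb' : s < P.ξb := lt_trans hs.2 hξδ
    have hsb : s ≤ P.ξb := hsb'.le
    have hφs : v ≤ P.φ s := P.mono' hs.1.le hsb
    have hφsk : P.φ s ≤ k := (P.mem s hs0 hsb).2.le
    have hws : 0 ≤ P.w s := P.w_nonneg hs0 hsb'
    have hφ's : 0 ≤ deriv P.φ s := P.derivφ_nonneg hs0 hsb'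
    have hwe : P.w s = D.m * P.φ s ^ (D.m - 1) * deriv P.φ s := P.w_eq hs0 hsb
    have hγs : γ ≤ D.m * P.φ s ^ (D.m - 1) := by
      rw [hγ]
      exact mul_le_mul_of_nonneg_left
        (Real.rpow_le_rpow hvpos.le hφs (by linarith [P.hm1])) P.hm0.le
    have h1 : γ * deriv P.φ s ≤ P.w s := by
      rw [hwe]
      exact mul_le_mul_of_nonneg_right hγs hφ's
    have hsξ : ξ < s := hs.1
    have h2 : deriv P.w s ≤ c * deriv P.φ s + L * (P.φ s - v) := by
      rw [P.ode' hs0 hsb]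
      have hdel : D.d v ≤ D.b (P.φ (s - c * D.r)) := by
        rw [← hbd]
        exact hbmono _ _ (P.nonneg (by linarith)) (P.mono' (by linarith) (by linarith))
      have hlip : D.d (P.φ s) - D.d v ≤ L * (P.φ s - v) := hLd v (P.φ s) hvpos.le hφs hφsk
      linarith
    have hφ'w : deriv P.φ s ≤ P.w s / γ := (le_div_iff₀ hγpos).2 (by linarith)
    constructor
    · exact ((P.dφ s hs0 hsb).hasDerivAt.sub_const v).add (P.dw2 s hs0 hsb).hasDerivAt
    · have hc' : c * deriv P.φ s ≤ c * (P.w s / γ) := mul_le_mul_of_nonneg_left hφ'w P.hc.le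
      have e1 : deriv P.φ s + deriv P.w s ≤ P.w s / γ + (c * (P.w s / γ) + L * (P.φ s - v)) := by
        linarith
      have e2 : P.w s / γ + (c * (P.w s / γ) + L * (P.φ s - v))
          = (1 + c) / γ * P.w s + L * (P.φ s - v) := by
        field_simp
        ring
      have e3 : (1 + c) / γ * P.w s + L * (P.φ s - v) ≤ K * P.w s + K * (P.φ s - v) :=
        add_le_add (mul_le_mul_of_nonneg_right hγK hws)
          (mul_le_mul_of_nonneg_right hLK (by linarith))
      have e4 : K * P.w s + K * (P.φ s - v) = K * z s := by rw [hz]; ring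
      linarith
  set E : ℝ → ℝ := fun s => Real.exp (-(K * s)) with hE
  have hEd : ∀ s : ℝ, HasDerivAt E (-K * E s) s := by
    intro s
    have h1 : HasDerivAt (fun s : ℝ => -(K * s)) (-K) s := by
      simpa [Pi.neg_def] using ((hasDerivAt_id s).const_mul K).neg
    have := (Real.hasDerivAt_exp (-(K * s))).comp s h1
    simpa [hE, mul_comm, Function.comp_def] using this
  have hanti : AntitoneOn (fun s => z s * E s) (Set.Icc ξ (ξ + δ)) := by
    apply antitoneOn_of_deriv_nonpos (convex_Icc _ _)
    · apply ContinuousOn.mul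
      · apply ContinuousOn.add ((P.cont.sub continuous_const).continuousOn)
        intro s hs
        exact ((P.dw2 s (h0.trans_le hs.1) (hs.2.trans hξδ.le)).continuousAt).continuousWithinAt
      · exact (Real.continuous_exp.comp (continuous_const.mul continuous_id).neg).continuousOn
    · intro s hs
      rw [interior_Icc] at hs
      exact (((key s hs).1.mul (hEd s)).differentiableAt).differentiableWithinAt
    · intro s hs
      rw [interior_Icc] at hs
      obtain ⟨hzd, hineq⟩ := key s hs
      have hprod : HasDerivAt (fun s => z s * E s)
          ((deriv P.φ s + deriv P.w s) * E s + z s * (-K * E s)) s := hzd.mul (hEd s)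
      rw [hprod.deriv]
      have hEpos : 0 < E s := Real.exp_pos _
      nlinarith [mul_le_mul_of_nonneg_right hineq hEpos.le]
  have h0z : z ξ = 0 := by rw [hz]; simp [hw0, hv]
  have hend := hanti (Set.left_mem_Icc.2 (by linarith)) (Set.right_mem_Icc.2 (by linarith))
    (by linarith)
  have hzpos : 0 < z (ξ + δ) := by
    have hφlt : v < P.φ (ξ + δ) := P.mono ⟨h0, hb.le⟩ ⟨by linarith, by linarith⟩ (by linarith)
    have hw : 0 ≤ P.w (ξ + δ) := P.w_nonneg (by linarith) hξδ
    rw [hz]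
    dsimp only
    linarith
  have hEpos : 0 < E (ξ + δ) := Real.exp_pos _
  have hEpos2 : 0 < E ξ := Real.exp_pos _
  have hend' : z (ξ + δ) * E (ξ + δ) ≤ z ξ * E ξ := hend
  rw [h0z] at hend'
  nlinarith [hend', hzpos, hEpos]

lemma w_pos {L : ℝ}
    (hLd : ∀ x y : ℝ, 0 ≤ x → x ≤ y → y ≤ k → D.d y - D.d x ≤ L * (y - x))
    (hbmono : ∀ x y : ℝ, 0 ≤ x → x ≤ y → D.b x ≤ D.b y)
    {ξ : ℝ} (h0 : 0 < ξ) (hb : ξ < P.ξb) : 0 < P.w ξ := by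
  rw [P.w_eq h0 hb.le]
  exact mul_pos (mul_pos P.hm0 (Real.rpow_pos_of_pos (P.pos h0 hb.le) _))
    (P.derivφ_pos hLd hbmono h0 hb)

end PCPack

end PCPackSec2
section PCPackSec3

open Set Filter

namespace PCPack

variable {D : FisherData} {c k : ℝ} (P : PCPack D c k)

include P in
/-- Tendency of `φ` to `0` at `0⁺`. -/
lemma φtend : Filter.Tendsto P.φ (nhdsWithin 0 (Set.Ioi 0)) (nhds 0) := by
  have h := P.cont.tendsto 0
  rw [P.zero 0 le_rfl] at h
  exact h.mono_left nhdsWithin_le_nhds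

set_option maxHeartbeats 1000000 in
/-- Edge estimate: `|w - cφ| ≤ L ξ φ(ξ)` near the edge. -/
lemma w_edge {L : ℝ} (hL0 : 0 ≤ L)
    (hdub : ∀ x ∈ Set.Icc (0:ℝ) k, D.d x ≤ L * x)
    (hbub : ∀ x ∈ Set.Icc (0:ℝ) k, D.b x ≤ L * x)
    (hdnn : ∀ x ∈ Set.Icc (0:ℝ) k, 0 ≤ D.d x)
    (hbnn : ∀ x ∈ Set.Icc (0:ℝ) k, 0 ≤ D.b x)
    {ξ : ℝ} (h0 : 0 < ξ) (hb : ξ ≤ P.ξb) : |P.w ξ - c * P.φ ξ| ≤ L * P.φ ξ * ξ := by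
  set A := L * P.φ ξ with hA
  have hA0 : 0 ≤ A := mul_nonneg hL0 (P.nonneg hb)
  have hcr : 0 ≤ c * D.r := mul_nonneg P.hc.le D.hr
  have hmemIcc : ∀ a : ℝ, a ≤ P.ξb → P.φ a ∈ Set.Icc 0 k := fun a ha => ⟨P.nonneg ha, P.le_k ha⟩
  -- derivative identity helper
  have hW : ∀ s : ℝ, 0 < s → s ≤ ξ →
      HasDerivAt (fun u => P.w u - c * P.φ u) (D.d (P.φ s) - D.b (P.φ (s - c * D.r))) s := by
    intro s hs0 hsξ
    have hsb : s ≤ P.ξb := hsξ.trans hb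
    have h1 : HasDerivAt (fun u => P.w u - c * P.φ u)
        (deriv P.w s - c * deriv P.φ s) s :=
      (P.dw2 s hs0 hsb).hasDerivAt.sub ((P.dφ s hs0 hsb).hasDerivAt.const_mul c)
    have h2 : deriv P.w s - c * deriv P.φ s = D.d (P.φ s) - D.b (P.φ (s - c * D.r)) := by
      have := P.ode' hs0 hsb
      linarith
    rwa [h2] at h1
  have hgbound : ∀ s : ℝ, 0 < s → s ≤ ξ →
      |D.d (P.φ s) - D.b (P.φ (s - c * D.r))| ≤ A := by
    intro s hs0 hsξ
    have hsb : s ≤ P.ξb := hsξ.trans hb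
    have hsb' : s - c * D.r ≤ P.ξb := by linarith
    have h1 : 0 ≤ D.d (P.φ s) := hdnn _ (hmemIcc s hsb)
    have h2 : 0 ≤ D.b (P.φ (s - c * D.r)) := hbnn _ (hmemIcc _ hsb')
    have h3 : D.d (P.φ s) ≤ L * P.φ s := hdub _ (hmemIcc s hsb)
    have h4 : D.b (P.φ (s - c * D.r)) ≤ L * P.φ (s - c * D.r) := hbub _ (hmemIcc _ hsb')
    have h5 : P.φ s ≤ P.φ ξ := P.mono' hsξ hb
    have h6 : P.φ (s - c * D.r) ≤ P.φ ξ := P.mono' (by linarith) hb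
    have h7 : L * P.φ s ≤ A := mul_le_mul_of_nonneg_left h5 hL0
    have h8 : L * P.φ (s - c * D.r) ≤ A := mul_le_mul_of_nonneg_left h6 hL0
    rw [abs_le]
    constructor <;> linarith
  have htendW : Filter.Tendsto (fun u => P.w u - c * P.φ u) (nhdsWithin 0 (Set.Ioi 0))
      (nhds 0) := by
    have := P.lim.sub (P.φtend.const_mul c)
    simp only [mul_zero, sub_zero] at this; exact this
  -- lower bound
  have hlow : -(A * ξ) ≤ P.w ξ - c * P.φ ξ := by
    have hFmono : ∀ ε ∈ Set.Ioo (0:ℝ) ξ,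
        (P.w ε - c * P.φ ε) + A * ε ≤ (P.w ξ - c * P.φ ξ) + A * ξ := by
      intro ε hε
      have key : MonotoneOn (fun u => (P.w u - c * P.φ u) + A * u) (Set.Icc ε ξ) := by
        apply monotoneOn_of_deriv_nonneg (convex_Icc _ _)
        · intro u hu
          have hu0 : 0 < u := hε.1.trans_le hu.1
          exact (((hW u hu0 hu.2).add (show HasDerivAt (fun u : ℝ => A * u) A u by simpa using (hasDerivAt_id u).const_mul A)).continuousAt).continuousWithinAt
        · intro u hu
          rw [interior_Icc] at hu
          have hu0 : 0 < u := hε.1.trans hu.1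
          exact (((hW u hu0 hu.2.le).add (show HasDerivAt (fun u : ℝ => A * u) A u by simpa using (hasDerivAt_id u).const_mul A)).differentiableAt).differentiableWithinAt
        · intro u hu
          rw [interior_Icc] at hu
          have hu0 : 0 < u := hε.1.trans hu.1
          have hder := (hW u hu0 hu.2.le).add (show HasDerivAt (fun u : ℝ => A * u) A u by simpa using (hasDerivAt_id u).const_mul A)
          rw [HasDerivAt.deriv (f := fun u => P.w u - c * P.φ u + A * u) hder]
          have := (abs_le.1 (hgbound u hu0 hu.2.le)).1
          have hA1 : A * 1 = A := mul_one A
          linarith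
      exact key (Set.left_mem_Icc.2 hε.2.le) (Set.right_mem_Icc.2 hε.2.le) hε.2.le
    have htend : Filter.Tendsto (fun ε => (P.w ε - c * P.φ ε) + A * ε)
        (nhdsWithin 0 (Set.Ioi 0)) (nhds 0) := by
      have h2 : Filter.Tendsto (fun ε : ℝ => A * ε) (nhdsWithin 0 (Set.Ioi 0)) (nhds 0) := by
        have := ((continuous_const.mul continuous_id : Continuous fun ε : ℝ => A * ε).tendsto 0).mono_left
          (nhdsWithin_le_nhds (s := Set.Ioi (0:ℝ)))
        convert this using 2 <;> simp [hA]
      simpa using htendW.add h2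
    have := le_of_tendsto htend (by
      filter_upwards [Ioo_mem_nhdsGT_of_mem ⟨le_refl (0:ℝ), h0⟩] with ε hε
      exact hFmono ε hε)
    linarith
  -- upper bound
  have hupp : P.w ξ - c * P.φ ξ ≤ A * ξ := by
    have hFmono : ∀ ε ∈ Set.Ioo (0:ℝ) ξ,
        A * ε - (P.w ε - c * P.φ ε) ≤ A * ξ - (P.w ξ - c * P.φ ξ) := by
      intro ε hε
      have key : MonotoneOn (fun u => A * u - (P.w u - c * P.φ u)) (Set.Icc ε ξ) := by
        apply monotoneOn_of_deriv_nonneg (convex_Icc _ _)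
        · intro u hu
          have hu0 : 0 < u := hε.1.trans_le hu.1
          exact (((show HasDerivAt (fun u : ℝ => A * u) A u by simpa using (hasDerivAt_id u).const_mul A).sub (hW u hu0 hu.2)).continuousAt).continuousWithinAt
        · intro u hu
          rw [interior_Icc] at hu
          have hu0 : 0 < u := hε.1.trans hu.1
          exact (((show HasDerivAt (fun u : ℝ => A * u) A u by simpa using (hasDerivAt_id u).const_mul A).sub (hW u hu0 hu.2.le)).differentiableAt).differentiableWithinAt
        · intro u hu
          rw [interior_Icc] at hu
          have hu0 : 0 < u := hε.1.trans hu.1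
          have hder := (show HasDerivAt (fun u : ℝ => A * u) A u by simpa using (hasDerivAt_id u).const_mul A).sub (hW u hu0 hu.2.le)
          rw [HasDerivAt.deriv (f := fun u => A * u - (P.w u - c * P.φ u)) hder]
          have := (abs_le.1 (hgbound u hu0 hu.2.le)).2
          have hA1 : A * 1 = A := mul_one A
          linarith
      exact key (Set.left_mem_Icc.2 hε.2.le) (Set.right_mem_Icc.2 hε.2.le) hε.2.le
    have htend : Filter.Tendsto (fun ε => A * ε - (P.w ε - c * P.φ ε))
        (nhdsWithin 0 (Set.Ioi 0)) (nhds 0) := by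
      have h2 : Filter.Tendsto (fun ε : ℝ => A * ε) (nhdsWithin 0 (Set.Ioi 0)) (nhds 0) := by
        have := ((continuous_const.mul continuous_id : Continuous fun ε : ℝ => A * ε).tendsto 0).mono_left
          (nhdsWithin_le_nhds (s := Set.Ioi (0:ℝ)))
        convert this using 2 <;> simp [hA]
      simpa using h2.sub htendW
    have := le_of_tendsto htend (by
      filter_upwards [Ioo_mem_nhdsGT_of_mem ⟨le_refl (0:ℝ), h0⟩] with ε hε
      exact hFmono ε hε)
    linarith
  rw [abs_le]
  constructor <;> linarith

end PCPack

end PCPackSec3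
section PCPackSec4

open Set Filter

namespace PCPack

variable {D : FisherData} {c k : ℝ} (P : PCPack D c k)

/-- Inverse of the profile on `(0, ξb)`. -/
noncomputable def X : ℝ → ℝ := Function.invFunOn P.φ (Set.Ioo 0 P.ξb)

include P in
lemma exX {v : ℝ} (hv : v ∈ Set.Ioo 0 (P.φ P.ξb)) : ∃ a ∈ Set.Ioo 0 P.ξb, P.φ a = v := by
  have h := intermediate_value_Ioo (le_of_lt P.hξb) P.cont.continuousOn (a := 0) (b := P.ξb)
  have hv' : v ∈ Set.Ioo (P.φ 0) (P.φ P.ξb) := by rwa [P.zero 0 le_rfl]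
  obtain ⟨a, ha, hav⟩ := h hv'
  exact ⟨a, ha, hav⟩

lemma φX {v : ℝ} (hv : v ∈ Set.Ioo 0 (P.φ P.ξb)) : P.φ (P.X v) = v :=
  Function.invFunOn_eq (P.exX hv)

lemma Xmem {v : ℝ} (hv : v ∈ Set.Ioo 0 (P.φ P.ξb)) : P.X v ∈ Set.Ioo 0 P.ξb :=
  Function.invFunOn_mem (P.exX hv)

include P in
lemma injOn : Set.InjOn P.φ (Set.Ioo 0 P.ξb) :=
  (P.mono.mono Set.Ioo_subset_Ioc_self).injOn

lemma Xφ {t : ℝ} (ht : t ∈ Set.Ioo 0 P.ξb) : P.X (P.φ t) = t := by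
  have hv : P.φ t ∈ Set.Ioo 0 (P.φ P.ξb) :=
    ⟨P.pos ht.1 ht.2.le, P.mono ⟨ht.1, ht.2.le⟩ ⟨P.hξb, le_rfl⟩ ht.2⟩
  exact P.injOn (P.Xmem hv) ht (P.φX hv)

lemma X_lt {v t : ℝ} (hv : v ∈ Set.Ioo 0 (P.φ P.ξb)) (ht0 : 0 < t) (htb : t ≤ P.ξb)
    (h : v < P.φ t) : P.X v < t := by
  by_contra hle
  push_neg at hle
  have h2 : P.φ t ≤ P.φ (P.X v) := P.mono' hle (P.Xmem hv).2.le
  rw [P.φX hv] at h2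
  linarith

set_option maxHeartbeats 800000 in
lemma Xcont {v : ℝ} (hv : v ∈ Set.Ioo 0 (P.φ P.ξb)) : ContinuousAt P.X v := by
  rw [Metric.continuousAt_iff]
  intro ε hε
  set ξv := P.X v with hξv
  have hm := P.Xmem hv
  set ε' := min ε (min (ξv / 2) ((P.ξb - ξv) / 2)) with hε'
  have hε'pos : 0 < ε' :=
    lt_min hε (lt_min (by linarith [hm.1]) (by linarith [hm.2]))
  have hε'a : ε' ≤ ξv / 2 := le_trans (min_le_right _ _) (min_le_left _ _)
  have hε'b : ε' ≤ (P.ξb - ξv) / 2 := le_trans (min_le_right _ _) (min_le_right _ _)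
  have ha : ξv - ε' ∈ Set.Ioo 0 P.ξb := ⟨by linarith [hm.1], by linarith [hm.2]⟩
  have hbb : ξv + ε' ∈ Set.Ioo 0 P.ξb := ⟨by linarith [hm.1], by linarith [hm.2]⟩
  have h1 : P.φ (ξv - ε') < v := by
    have := P.mono ⟨ha.1, ha.2.le⟩ ⟨hm.1, hm.2.le⟩ (by linarith)
    rwa [P.φX hv] at this
  have h2 : v < P.φ (ξv + ε') := by
    have := P.mono ⟨hm.1, hm.2.le⟩ ⟨hbb.1, hbb.2.le⟩ (by linarith)
    rwa [P.φX hv] at this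
  refine ⟨min (v - P.φ (ξv - ε')) (P.φ (ξv + ε') - v), lt_min (by linarith) (by linarith), ?_⟩
  intro y hy
  rw [Real.dist_eq] at hy ⊢
  set δ := min (v - P.φ (ξv - ε')) (P.φ (ξv + ε') - v) with hδ
  have hδ1 : δ ≤ v - P.φ (ξv - ε') := min_le_left _ _
  have hδ2 : δ ≤ P.φ (ξv + ε') - v := min_le_right _ _
  have habs := abs_lt.1 hy
  have hyIoo : y ∈ Set.Ioo 0 (P.φ P.ξb) := by
    constructor
    · have h3 : 0 < P.φ (ξv - ε') := P.pos ha.1 ha.2.le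
      linarith [habs.1]
    · have h6 : P.φ (ξv + ε') < P.φ P.ξb := P.mono ⟨hbb.1, hbb.2.le⟩ ⟨P.hξb, le_rfl⟩ hbb.2
      linarith [habs.2]
  have hXyφ := P.φX hyIoo
  have hXy := P.Xmem hyIoo
  have hlow : ξv - ε' < P.X y := by
    by_contra hc
    push_neg at hc
    have h7 : P.φ (P.X y) ≤ P.φ (ξv - ε') := P.mono' hc ha.2.le
    rw [hXyφ] at h7
    linarith [habs.1]
  have hhigh : P.X y < ξv + ε' := by
    by_contra hc
    push_neg at hc
    have h8 : P.φ (ξv + ε') ≤ P.φ (P.X y) := P.mono' hc hXy.2.le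
    rw [hXyφ] at h8
    linarith [habs.2]
  have : |P.X y - ξv| < ε' := abs_lt.2 ⟨by linarith, by linarith⟩
  exact lt_of_lt_of_le this (min_le_left _ _)

lemma XhasDeriv {v : ℝ} (hv : v ∈ Set.Ioo 0 (P.φ P.ξb))
    (hne : deriv P.φ (P.X v) ≠ 0) :
    HasDerivAt P.X (deriv P.φ (P.X v))⁻¹ v := by
  have hm := P.Xmem hv
  apply HasDerivAt.of_local_left_inverse (P.Xcont hv) (P.dφ _ hm.1 hm.2.le).hasDerivAt hne
  filter_upwards [isOpen_Ioo.mem_nhds hv] with y hy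
  exact P.φX hy

include P in
lemma Xtend : Filter.Tendsto P.X (nhdsWithin 0 (Set.Ioi 0)) (nhds 0) := by
  rw [tendsto_order]
  constructor
  · intro l hl
    have hmem : Set.Ioo (0:ℝ) (P.φ P.ξb) ∈ nhdsWithin 0 (Set.Ioi 0) :=
      Ioo_mem_nhdsGT_of_mem ⟨le_refl (0:ℝ), P.pos P.hξb le_rfl⟩
    filter_upwards [hmem] with y hy
    exact lt_trans hl (P.Xmem hy).1
  · intro u hu
    set t' := min (u / 2) P.ξb with ht'
    have ht'0 : 0 < t' := lt_min (by linarith) P.hξb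
    have ht'b : t' ≤ P.ξb := min_le_right _ _
    have hmem : Set.Ioo (0:ℝ) (P.φ t') ∈ nhdsWithin 0 (Set.Ioi 0) :=
      Ioo_mem_nhdsGT_of_mem ⟨le_refl (0:ℝ), P.pos ht'0 ht'b⟩
    filter_upwards [hmem] with y hy
    have hyV : y ∈ Set.Ioo 0 (P.φ P.ξb) :=
      ⟨hy.1, lt_of_lt_of_le hy.2 (P.mono' ht'b le_rfl)⟩
    have := P.X_lt hyV ht'0 ht'b hy.2
    have h2 : t' ≤ u / 2 := min_le_left _ _
    linarith

end PCPack

end PCPackSec4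
set_option maxHeartbeats 4000000 in
/-- phase comparison principle: for maximal sharp local wave profiles
with the same ceiling `k` and speeds `c₁ > c₂ > 0`, at points of their maximal
increasing intervals where the profiles take the same value, the faster profile
has the strictly larger derivative. -/
theorem phase_comparison (D : FisherData) (k c₁ c₂ : ℝ)
    (hk : D.κ ≤ k) (hc₂ : 0 < c₂) (hc : c₂ < c₁)
    (ξ₀₁ ξ₀₂ : EReal) (φ₁ φ₂ : ℝ → ℝ)
    (h₁ : IsSharpLocalProfile D c₁ k ξ₀₁ φ₁) (he₁ : EdgeAsymp D.m c₁ φ₁)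
    (hmax₁ : ∀ (ξ₀' : EReal) (φ' : ℝ → ℝ),
      IsSharpLocalProfile D c₁ k ξ₀' φ' → EdgeAsymp D.m c₁ φ' → ξ₀' ≤ ξ₀₁)
    (h₂ : IsSharpLocalProfile D c₂ k ξ₀₂ φ₂) (he₂ : EdgeAsymp D.m c₂ φ₂)
    (hmax₂ : ∀ (ξ₀' : EReal) (φ' : ℝ → ℝ),
      IsSharpLocalProfile D c₂ k ξ₀' φ' → EdgeAsymp D.m c₂ φ' → ξ₀' ≤ ξ₀₂)
    (ξh₁ ξh₂ : EReal)
    (hξh₁pos : 0 < ξh₁) (hξh₁le : ξh₁ ≤ ξ₀₁)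
    (hmono₁ : StrictMonoOn φ₁ {ξ : ℝ | 0 < ξ ∧ (ξ : EReal) < ξh₁})
    (hξh₁max : ∀ ζ : EReal, ζ ≤ ξ₀₁ →
      StrictMonoOn φ₁ {ξ : ℝ | 0 < ξ ∧ (ξ : EReal) < ζ} → ζ ≤ ξh₁)
    (hξh₂pos : 0 < ξh₂) (hξh₂le : ξh₂ ≤ ξ₀₂)
    (hmono₂ : StrictMonoOn φ₂ {ξ : ℝ | 0 < ξ ∧ (ξ : EReal) < ξh₂})
    (hξh₂max : ∀ ζ : EReal, ζ ≤ ξ₀₂ →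
      StrictMonoOn φ₂ {ξ : ℝ | 0 < ξ ∧ (ξ : EReal) < ζ} → ζ ≤ ξh₂) :
    ∀ ξ₁ ξ₂ : ℝ, 0 < ξ₁ → (ξ₁ : EReal) < ξh₁ → 0 < ξ₂ → (ξ₂ : EReal) < ξh₂ →
      φ₁ ξ₁ = φ₂ ξ₂ → deriv φ₂ ξ₂ < deriv φ₁ ξ₁ := by
  intro ξ₁ ξ₂ h10 h1h h20 h2h hveq
  by_contra hcon
  push_neg at hcon
  obtain ⟨hpos₁, hcont₁, hzero₁, hmem₁, hdφ₁, hdwa₁, hdw2₁, hlim₁, hode₁⟩ := h₁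
  obtain ⟨hpos₂, hcont₂, hzero₂, hmem₂, hdφ₂, hdwa₂, hdw2₂, hlim₂, hode₂⟩ := h₂
  obtain ⟨ξb₁, hξb₁gt, hξb₁lt⟩ := EReal.lt_iff_exists_real_btwn.1 h1h
  obtain ⟨ξb₂, hξb₂gt, hξb₂lt⟩ := EReal.lt_iff_exists_real_btwn.1 h2h
  have hξ1b : ξ₁ < ξb₁ := EReal.coe_lt_coe_iff.1 hξb₁gt
  have hξ2b : ξ₂ < ξb₂ := EReal.coe_lt_coe_iff.1 hξb₂gt
  have hdom₁' : ∀ ξ : ℝ, ξ ≤ ξb₁ → (ξ : EReal) < ξh₁ := fun ξ hξ =>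
    lt_of_le_of_lt (EReal.coe_le_coe_iff.2 hξ) hξb₁lt
  have hdom₂' : ∀ ξ : ℝ, ξ ≤ ξb₂ → (ξ : EReal) < ξh₂ := fun ξ hξ =>
    lt_of_le_of_lt (EReal.coe_le_coe_iff.2 hξ) hξb₂lt
  have hdom₁ : ∀ ξ : ℝ, ξ ≤ ξb₁ → (ξ : EReal) < ξ₀₁ := fun ξ hξ =>
    lt_of_lt_of_le (hdom₁' ξ hξ) hξh₁le
  have hdom₂ : ∀ ξ : ℝ, ξ ≤ ξb₂ → (ξ : EReal) < ξ₀₂ := fun ξ hξ =>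
    lt_of_lt_of_le (hdom₂' ξ hξ) hξh₂le
  set P₁ : PCPack D c₁ k :=
    { φ := φ₁, ξb := ξb₁, hc := lt_trans hc₂ hc, hξb := lt_trans h10 hξ1b,
      cont := hcont₁, zero := hzero₁,
      mem := fun ξ h0 hbb => hmem₁ ξ h0 (hdom₁ ξ hbb),
      dφ := fun ξ h0 hbb => hdφ₁ ξ h0 (hdom₁ ξ hbb),
      dw2 := fun ξ h0 hbb => hdw2₁ ξ h0 (hdom₁ ξ hbb),
      lim := hlim₁,
      ode := fun ξ h0 hbb => hode₁ ξ h0 (hdom₁ ξ hbb),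
      mono := fun a ha b hb hab =>
        hmono₁ ⟨ha.1, hdom₁' a ha.2⟩ ⟨hb.1, hdom₁' b hb.2⟩ hab } with hP₁def
  set P₂ : PCPack D c₂ k :=
    { φ := φ₂, ξb := ξb₂, hc := hc₂, hξb := lt_trans h20 hξ2b,
      cont := hcont₂, zero := hzero₂,
      mem := fun ξ h0 hbb => hmem₂ ξ h0 (hdom₂ ξ hbb),
      dφ := fun ξ h0 hbb => hdφ₂ ξ h0 (hdom₂ ξ hbb),
      dw2 := fun ξ h0 hbb => hdw2₂ ξ h0 (hdom₂ ξ hbb),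
      lim := hlim₂,
      ode := fun ξ h0 hbb => hode₂ ξ h0 (hdom₂ ξ hbb),
      mono := fun a ha b hb hab =>
        hmono₂ ⟨ha.1, hdom₂' a ha.2⟩ ⟨hb.1, hdom₂' b hb.2⟩ hab } with hP₂def
  -- Lipschitz bounds for d and b on [0, k]
  have hk0 : (0:ℝ) < k := lt_of_lt_of_le D.hκ hk
  obtain ⟨L, hL0, hLd, hLb⟩ := pc_exists_L D hk0.le
  have hdmono : ∀ x y : ℝ, 0 ≤ x → x ≤ y → D.d x ≤ D.d y := pc_mono D.hd_smooth D.hd'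
  have hbmono : ∀ x y : ℝ, 0 ≤ x → x ≤ y → D.b x ≤ D.b y := pc_mono D.hb_smooth D.hb'
  have hdlip : ∀ x y : ℝ, 0 ≤ x → x ≤ y → y ≤ k → D.d y - D.d x ≤ L * (y - x) :=
    pc_lip D.hd_smooth hLd
  have hdnn : ∀ x ∈ Set.Icc (0:ℝ) k, 0 ≤ D.d x := fun x hx => by
    have := hdmono 0 x le_rfl hx.1
    rwa [D.hd0] at this
  have hbnn : ∀ x ∈ Set.Icc (0:ℝ) k, 0 ≤ D.b x := fun x hx => by
    have := hbmono 0 x le_rfl hx.1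
    rwa [D.hb0] at this
  have hdub : ∀ x ∈ Set.Icc (0:ℝ) k, D.d x ≤ L * x := fun x hx => by
    have := pc_lip D.hd_smooth hLd 0 x le_rfl hx.1 hx.2
    rw [D.hd0] at this
    simpa using this
  have hbub : ∀ x ∈ Set.Icc (0:ℝ) k, D.b x ≤ L * x := fun x hx => by
    have := pc_lip D.hb_smooth hLb 0 x le_rfl hx.1 hx.2
    rw [D.hb0] at this
    simpa using this
  -- the common value and the working interval in value space
  set vb := P₁.φ ξ₁ with hvb
  have hvbpos : 0 < vb := P₁.pos h10 hξ1b.le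
  set V := min (P₁.φ P₁.ξb) (P₂.φ P₂.ξb) with hV
  have hvb2 : P₂.φ ξ₂ = vb := hveq.symm
  have hvbV : vb < V := by
    apply lt_min
    · exact P₁.mono ⟨h10, hξ1b.le⟩ ⟨P₁.hξb, le_rfl⟩ hξ1b
    · rw [← hvb2]
      exact P₂.mono ⟨h20, hξ2b.le⟩ ⟨P₂.hξb, le_rfl⟩ hξ2b
  have hvV1 : ∀ v ∈ Set.Ioo (0:ℝ) V, v ∈ Set.Ioo 0 (P₁.φ P₁.ξb) := fun v hv =>
    ⟨hv.1, lt_of_lt_of_le hv.2 (min_le_left _ _)⟩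
  have hvV2 : ∀ v ∈ Set.Ioo (0:ℝ) V, v ∈ Set.Ioo 0 (P₂.φ P₂.ξb) := fun v hv =>
    ⟨hv.1, lt_of_lt_of_le hv.2 (min_le_right _ _)⟩
  -- phase functions
  set ψ₁ : ℝ → ℝ := fun v => P₁.w (P₁.X v) with hψ₁
  set ψ₂ : ℝ → ℝ := fun v => P₂.w (P₂.X v) with hψ₂
  have hψ₁eq : ∀ v ∈ Set.Ioo (0:ℝ) V, ψ₁ v = D.m * v ^ (D.m - 1) * deriv P₁.φ (P₁.X v) := by
    intro v hv
    have hv1 := hvV1 v hv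
    have hm := P₁.Xmem hv1
    show P₁.w (P₁.X v) = _
    rw [P₁.w_eq hm.1 hm.2.le, P₁.φX hv1]
  have hψ₂eq : ∀ v ∈ Set.Ioo (0:ℝ) V, ψ₂ v = D.m * v ^ (D.m - 1) * deriv P₂.φ (P₂.X v) := by
    intro v hv
    have hv2 := hvV2 v hv
    have hm := P₂.Xmem hv2
    show P₂.w (P₂.X v) = _
    rw [P₂.w_eq hm.1 hm.2.le, P₂.φX hv2]
  have hq₁pos : ∀ v ∈ Set.Ioo (0:ℝ) V, 0 < deriv P₁.φ (P₁.X v) := fun v hv =>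
    P₁.derivφ_pos hdlip hbmono (P₁.Xmem (hvV1 v hv)).1 (P₁.Xmem (hvV1 v hv)).2
  have hq₂pos : ∀ v ∈ Set.Ioo (0:ℝ) V, 0 < deriv P₂.φ (P₂.X v) := fun v hv =>
    P₂.derivφ_pos hdlip hbmono (P₂.Xmem (hvV2 v hv)).1 (P₂.Xmem (hvV2 v hv)).2
  have hψ₁deriv : ∀ v ∈ Set.Ioo (0:ℝ) V,
      HasDerivAt ψ₁ (deriv P₁.w (P₁.X v) * (deriv P₁.φ (P₁.X v))⁻¹) v := by
    intro v hv
    have hv1 := hvV1 v hv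
    have hm := P₁.Xmem hv1
    have hX := P₁.XhasDeriv hv1 (ne_of_gt (hq₁pos v hv))
    exact ((P₁.dw2 _ hm.1 hm.2.le).hasDerivAt.comp v hX : _)
  have hψ₂deriv : ∀ v ∈ Set.Ioo (0:ℝ) V,
      HasDerivAt ψ₂ (deriv P₂.w (P₂.X v) * (deriv P₂.φ (P₂.X v))⁻¹) v := by
    intro v hv
    have hv2 := hvV2 v hv
    have hm := P₂.Xmem hv2
    have hX := P₂.XhasDeriv hv2 (ne_of_gt (hq₂pos v hv))
    exact ((P₂.dw2 _ hm.1 hm.2.le).hasDerivAt.comp v hX : _)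
  -- edge estimates
  have hψ₁edge : ∀ v ∈ Set.Ioo (0:ℝ) V, |ψ₁ v - c₁ * v| ≤ L * v * P₁.X v := by
    intro v hv
    have hv1 := hvV1 v hv
    have hm := P₁.Xmem hv1
    have h := P₁.w_edge hL0 hdub hbub hdnn hbnn hm.1 hm.2.le
    rw [P₁.φX hv1] at h
    exact h
  have hψ₂edge : ∀ v ∈ Set.Ioo (0:ℝ) V, |ψ₂ v - c₂ * v| ≤ L * v * P₂.X v := by
    intro v hv
    have hv2 := hvV2 v hv
    have hm := P₂.Xmem hv2
    have h := P₂.w_edge hL0 hdub hbub hdnn hbnn hm.1 hm.2.le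
    rw [P₂.φX hv2] at h
    exact h
  -- choose the edge threshold
  have hc12 : 0 < c₁ - c₂ := by linarith
  set t := min (min P₁.ξb P₂.ξb) ((c₁ - c₂) / (2 * (L + 1))) with ht
  have htpos : 0 < t := lt_min (lt_min P₁.hξb P₂.hξb) (by positivity)
  have ht1 : t ≤ P₁.ξb := le_trans (min_le_left _ _) (min_le_left _ _)
  have ht2 : t ≤ P₂.ξb := le_trans (min_le_left _ _) (min_le_right _ _)
  have htL : 2 * (L * t) < c₁ - c₂ := by
    have h1 : t ≤ (c₁ - c₂) / (2 * (L + 1)) := min_le_right _ _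
    have h2 : (0:ℝ) < 2 * (L + 1) := by linarith
    have h3 : t * (2 * (L + 1)) ≤ c₁ - c₂ := by
      have := mul_le_mul_of_nonneg_right h1 h2.le
      rwa [div_mul_cancel₀ _ (ne_of_gt h2)] at this
    nlinarith
  set δ₀ := min (P₁.φ t) (P₂.φ t) with hδ₀
  have hδ₀pos : 0 < δ₀ := lt_min (P₁.pos htpos ht1) (P₂.pos htpos ht2)
  have hedge : ∀ v ∈ Set.Ioo (0:ℝ) V, v < δ₀ → 0 < ψ₁ v - ψ₂ v := by
    intro v hv hvδ
    have hv1 := hvV1 v hv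
    have hv2 := hvV2 v hv
    have hX1 : P₁.X v < t := P₁.X_lt hv1 htpos ht1
      (lt_of_lt_of_le hvδ (min_le_left _ _))
    have hX2 : P₂.X v < t := P₂.X_lt hv2 htpos ht2
      (lt_of_lt_of_le hvδ (min_le_right _ _))
    have he1 := abs_le.1 (hψ₁edge v hv)
    have he2 := abs_le.1 (hψ₂edge v hv)
    have hLv : 0 ≤ L * v := mul_nonneg hL0 hv.1.le
    have hb1 : L * v * P₁.X v ≤ L * v * t := mul_le_mul_of_nonneg_left hX1.le hLv
    have hb2 : L * v * P₂.X v ≤ L * v * t := mul_le_mul_of_nonneg_left hX2.le hLv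
    have hgap : 0 < v * ((c₁ - c₂) - 2 * (L * t)) := mul_pos hv.1 (by linarith)
    nlinarith [he1.1, he2.2, hb1, hb2, hgap]
  -- the assumption gives Δ(vb) ≤ 0
  have hvbV' : vb ∈ Set.Ioo (0:ℝ) V := ⟨hvbpos, hvbV⟩
  have hX1vb : P₁.X vb = ξ₁ := P₁.Xφ ⟨h10, hξ1b⟩
  have hX2vb : P₂.X vb = ξ₂ := by
    rw [← hvb2]
    exact P₂.Xφ ⟨h20, hξ2b⟩
  have hpowvb : 0 < D.m * vb ^ (D.m - 1) :=
    mul_pos P₁.hm0 (Real.rpow_pos_of_pos hvbpos _)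
  have hΔvb : ψ₁ vb - ψ₂ vb ≤ 0 := by
    have e1 := hψ₁eq vb hvbV'
    have e2 := hψ₂eq vb hvbV'
    rw [hX1vb] at e1
    rw [hX2vb] at e2
    rw [e1, e2]
    have hcon' : deriv P₁.φ ξ₁ ≤ deriv P₂.φ ξ₂ := hcon
    have hmul : D.m * vb ^ (D.m - 1) * deriv P₁.φ ξ₁ ≤ D.m * vb ^ (D.m - 1) * deriv P₂.φ ξ₂ :=
      mul_le_mul_of_nonneg_left hcon' hpowvb.le
    linarith
  have hδ₀vb : δ₀ ≤ vb := by
    by_contra hlt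
    push_neg at hlt
    exact absurd hΔvb (not_le.2 (hedge vb hvbV' hlt))
  set δ' := δ₀ / 2 with hδ'
  have hδ'pos : 0 < δ' := by rw [hδ']; linarith
  have hδ'δ₀ : δ' < δ₀ := by rw [hδ']; linarith
  have hδ'vb : δ' < vb := lt_of_lt_of_le hδ'δ₀ hδ₀vb
  have hδ'V : δ' ∈ Set.Ioo (0:ℝ) V := ⟨hδ'pos, lt_trans hδ'vb hvbV⟩
  -- the first crossing point
  set S := Set.Icc δ' vb ∩ (fun v => ψ₁ v - ψ₂ v) ⁻¹' Set.Iic 0 with hS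
  have hSclosed : IsClosed S := by
    apply ContinuousOn.preimage_isClosed_of_isClosed _ isClosed_Icc isClosed_Iic
    intro v hv
    have hvV : v ∈ Set.Ioo (0:ℝ) V := ⟨lt_of_lt_of_le hδ'pos hv.1, lt_of_le_of_lt hv.2 hvbV⟩
    exact (((hψ₁deriv v hvV).continuousAt).sub ((hψ₂deriv v hvV).continuousAt)).continuousWithinAt
  have hSne : S.Nonempty := ⟨vb, ⟨hδ'vb.le, le_rfl⟩, hΔvb⟩
  have hSbdd : BddBelow S := ⟨δ', fun x hx => hx.1.1⟩
  set vs := sInf S with hvs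
  have hvsS : vs ∈ S := hSclosed.csInf_mem hSne hSbdd
  have hvsIcc : vs ∈ Set.Icc δ' vb := hvsS.1
  have hΔvs : ψ₁ vs - ψ₂ vs ≤ 0 := hvsS.2
  have hvsV : vs ∈ Set.Ioo (0:ℝ) V :=
    ⟨lt_of_lt_of_le hδ'pos hvsIcc.1, lt_of_le_of_lt hvsIcc.2 hvbV⟩
  have hΔposlt : ∀ v ∈ Set.Ioo (0:ℝ) V, v < vs → 0 < ψ₁ v - ψ₂ v := by
    intro v hv hvvs
    rcases lt_or_ge v δ₀ with h | h
    · exact hedge v hv h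
    · by_contra hcc
      push_neg at hcc
      have hvS : v ∈ S := ⟨⟨le_trans hδ'δ₀.le h, le_trans hvvs.le hvsIcc.2⟩, hcc⟩
      exact absurd (csInf_le hSbdd hvS) (not_le.2 hvvs)
  have hvsδ' : δ' < vs := by
    rcases lt_or_eq_of_le hvsIcc.1 with h | h
    · exact h
    · exfalso
      have := hedge δ' hδ'V hδ'δ₀
      rw [h] at this
      linarith
  have hΔvs0 : ψ₁ vs - ψ₂ vs = 0 := by
    refine le_antisymm hΔvs ?_
    have hconΔ : ContinuousAt (fun v => ψ₁ v - ψ₂ v) vs :=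
      ((hψ₁deriv vs hvsV).continuousAt).sub ((hψ₂deriv vs hvsV).continuousAt)
    refine ge_of_tendsto (hconΔ.tendsto.mono_left
      (nhdsWithin_le_nhds (s := Set.Iio vs))) ?_
    filter_upwards [Ioo_mem_nhdsLT_of_mem ⟨hvsδ', le_refl vs⟩] with y hy
    have hyV : y ∈ Set.Ioo (0:ℝ) V := ⟨lt_trans hδ'pos hy.1, lt_trans hy.2 hvsV.2⟩
    exact (hΔposlt y hyV hy.2).le
  -- equal derivatives at the crossing point
  have hvs1 := hvV1 vs hvsV
  have hvs2 := hvV2 vs hvsV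
  have hm1vs := P₁.Xmem hvs1
  have hm2vs := P₂.Xmem hvs2
  have hq₁ : 0 < deriv P₁.φ (P₁.X vs) := hq₁pos vs hvsV
  have hq₂ : 0 < deriv P₂.φ (P₂.X vs) := hq₂pos vs hvsV
  have hpowvs : 0 < D.m * vs ^ (D.m - 1) :=
    mul_pos P₁.hm0 (Real.rpow_pos_of_pos hvsV.1 _)
  have hqeq : deriv P₁.φ (P₁.X vs) = deriv P₂.φ (P₂.X vs) := by
    have e1 := hψ₁eq vs hvsV
    have e2 := hψ₂eq vs hvsV
    have hmm : D.m * vs ^ (D.m - 1) * deriv P₁.φ (P₁.X vs)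
        = D.m * vs ^ (D.m - 1) * deriv P₂.φ (P₂.X vs) := by
      rw [← e1, ← e2]
      linarith
    exact mul_left_cancel₀ (ne_of_gt hpowvs) hmm
  -- monotonicity of X₂ - X₁
  have hXmono : ∀ a : ℝ, 0 < a → a ≤ vs → P₂.X a - P₁.X a ≤ P₂.X vs - P₁.X vs := by
    intro a ha0 havs
    rcases eq_or_lt_of_le havs with rfl | hlt
    · exact le_rfl
    have hmemV : ∀ u : ℝ, u ∈ Set.Icc a vs → u ∈ Set.Ioo (0:ℝ) V := fun u hu =>
      ⟨lt_of_lt_of_le ha0 hu.1, lt_of_le_of_lt hu.2 hvsV.2⟩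
    have key : MonotoneOn (fun v => P₂.X v - P₁.X v) (Set.Icc a vs) := by
      apply monotoneOn_of_deriv_nonneg (convex_Icc _ _)
      · intro u hu
        have huV := hmemV u hu
        exact (((P₂.XhasDeriv (hvV2 u huV) (ne_of_gt (hq₂pos u huV))).sub
          (P₁.XhasDeriv (hvV1 u huV) (ne_of_gt (hq₁pos u huV)))).continuousAt).continuousWithinAt
      · intro u hu
        rw [interior_Icc] at hu
        have huV := hmemV u ⟨hu.1.le, hu.2.le⟩
        exact (((P₂.XhasDeriv (hvV2 u huV) (ne_of_gt (hq₂pos u huV))).sub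
          (P₁.XhasDeriv (hvV1 u huV) (ne_of_gt (hq₁pos u huV)))).differentiableAt).differentiableWithinAt
      · intro u hu
        rw [interior_Icc] at hu
        have huV := hmemV u ⟨hu.1.le, hu.2.le⟩
        have hder := (P₂.XhasDeriv (hvV2 u huV) (ne_of_gt (hq₂pos u huV))).sub
          (P₁.XhasDeriv (hvV1 u huV) (ne_of_gt (hq₁pos u huV)))
        rw [HasDerivAt.deriv (f := fun v => P₂.X v - P₁.X v) hder]
        have hΔu : 0 < ψ₁ u - ψ₂ u := hΔposlt u huV hu.2
        have e1 := hψ₁eq u huV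
        have e2 := hψ₂eq u huV
        have hpowu : 0 < D.m * u ^ (D.m - 1) :=
          mul_pos P₁.hm0 (Real.rpow_pos_of_pos huV.1 _)
        have hqu : deriv P₂.φ (P₂.X u) ≤ deriv P₁.φ (P₁.X u) := by
          by_contra hq
          push_neg at hq
          have := mul_lt_mul_of_pos_left hq hpowu
          rw [← e1, ← e2] at this
          linarith
        have hinv : (deriv P₁.φ (P₁.X u))⁻¹ ≤ (deriv P₂.φ (P₂.X u))⁻¹ := by
          rw [inv_le_inv₀ (hq₁pos u huV) (hq₂pos u huV)]
          exact hqu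
        linarith
    exact key (Set.left_mem_Icc.2 havs) (Set.right_mem_Icc.2 havs) havs
  have hXnn : 0 ≤ P₂.X vs - P₁.X vs := by
    have htend : Filter.Tendsto (fun a => P₂.X a - P₁.X a) (nhdsWithin 0 (Set.Ioi 0))
        (nhds 0) := by
      have := P₂.Xtend.sub P₁.Xtend
      simpa using this
    apply le_of_tendsto htend
    filter_upwards [Ioo_mem_nhdsGT_of_mem ⟨le_refl (0:ℝ), hvsV.1⟩] with a ha
    exact hXmono a ha.1 ha.2.le
  -- delayed-argument comparison
  have hcr12 : c₂ * D.r ≤ c₁ * D.r := mul_le_mul_of_nonneg_right hc.le D.hr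
  have hcr2nn : 0 ≤ c₂ * D.r := mul_nonneg hc₂.le D.hr
  have hcr1nn : 0 ≤ c₁ * D.r := mul_nonneg (lt_trans hc₂ hc).le D.hr
  have harg2b : P₂.X vs - c₂ * D.r ≤ P₂.ξb := by linarith [hm2vs.2]
  have harg1b : P₁.X vs - c₁ * D.r ≤ P₁.ξb := by linarith [hm1vs.2]
  have hφφ : P₁.φ (P₁.X vs - c₁ * D.r) ≤ P₂.φ (P₂.X vs - c₂ * D.r) := by
    rcases le_or_gt (P₁.X vs - c₁ * D.r) 0 with h | h
    · rw [P₁.zero _ h]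
      exact P₂.nonneg harg2b
    · have ha₁m : P₁.X vs - c₁ * D.r ∈ Set.Ioo 0 P₁.ξb :=
        ⟨h, lt_of_le_of_lt (by linarith) hm1vs.2⟩
      set wv := P₁.φ (P₁.X vs - c₁ * D.r) with hwv
      have hwv0 : 0 < wv := P₁.pos h ha₁m.2.le
      have hwvvs : wv ≤ vs := by
        have := P₁.mono' (show P₁.X vs - c₁ * D.r ≤ P₁.X vs by linarith) hm1vs.2.le
        rwa [P₁.φX hvs1] at this
      have hX1w : P₁.X wv = P₁.X vs - c₁ * D.r := P₁.Xφ ha₁m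
      have hstep := hXmono wv hwv0 hwvvs
      rw [hX1w] at hstep
      have hwvV : wv ∈ Set.Ioo (0:ℝ) V := ⟨hwv0, lt_of_le_of_lt hwvvs hvsV.2⟩
      have hwv2 : wv ∈ Set.Ioo 0 (P₂.φ P₂.ξb) := hvV2 wv hwvV
      have hX2wv : P₂.X wv ≤ P₂.X vs - c₂ * D.r := by linarith
      have := P₂.mono' hX2wv harg2b
      rwa [P₂.φX hwv2] at this
  have hbb' : D.b (P₁.φ (P₁.X vs - c₁ * D.r)) ≤ D.b (P₂.φ (P₂.X vs - c₂ * D.r)) :=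
    hbmono _ _ (P₁.nonneg harg1b) hφφ
  -- derivative of Δ at the crossing point is nonpositive
  have hΔ'le : deriv P₁.w (P₁.X vs) * (deriv P₁.φ (P₁.X vs))⁻¹
      - deriv P₂.w (P₂.X vs) * (deriv P₂.φ (P₂.X vs))⁻¹ ≤ 0 := by
    apply pc_deriv_nonpos_of_left ((hψ₁deriv vs hvsV).sub (hψ₂deriv vs hvsV))
    filter_upwards [Ioo_mem_nhdsLT_of_mem ⟨hvsδ', le_refl vs⟩] with y hy
    have hyV : y ∈ Set.Ioo (0:ℝ) V := ⟨lt_trans hδ'pos hy.1, lt_trans hy.2 hvsV.2⟩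
    have := (hΔposlt y hyV hy.2).le
    simp only [Pi.sub_apply]
    linarith [hΔvs0]
  -- but the ODE forces it to be positive: contradiction
  have hode1 : deriv P₁.w (P₁.X vs)
      = c₁ * deriv P₁.φ (P₁.X vs) + D.d vs - D.b (P₁.φ (P₁.X vs - c₁ * D.r)) := by
    have h := P₁.ode' hm1vs.1 hm1vs.2.le
    rwa [P₁.φX hvs1] at h
  have hode2 : deriv P₂.w (P₂.X vs)
      = c₂ * deriv P₂.φ (P₂.X vs) + D.d vs - D.b (P₂.φ (P₂.X vs - c₂ * D.r)) := by
    have h := P₂.ode' hm2vs.1 hm2vs.2.le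
    rwa [P₂.φX hvs2] at h
  rw [hode1, hode2, hqeq] at hΔ'le
  set q := deriv P₂.φ (P₂.X vs) with hq
  set B₁ := D.b (P₁.φ (P₁.X vs - c₁ * D.r)) with hB₁
  set B₂ := D.b (P₂.φ (P₂.X vs - c₂ * D.r)) with hB₂
  have hqinv : 0 < q⁻¹ := inv_pos.2 hq₂
  have hexp : (c₁ * q + D.d vs - B₁) * q⁻¹ - (c₂ * q + D.d vs - B₂) * q⁻¹
      = (c₁ - c₂) + (B₂ - B₁) * q⁻¹ := by
    have hqne : q ≠ 0 := ne_of_gt hq₂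
    field_simp
    ring
  rw [hexp] at hΔ'le
  have hBnn : 0 ≤ (B₂ - B₁) * q⁻¹ := mul_nonneg (by linarith [hbb']) hqinv.le
  linarith
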